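/- Let G be a free group with free generating set and tree Cayley graph T, let ξ be an end of T, and for n ∈ ℕ let G(n, ξ) = {g ∈ G : (g | ξ)_e ≤ n}. Then ξ does not lie in the closure of G(n, ξ) in the end compactification Ḡ of T, for any n. -/

import Mathlib

/-- An end of the tree Cayley graph of a free group, given as a geodesic ray from the
identity: `r n` is the vertex at distance `n` from the identity, and the reduced words
form a prefix chain. -/
structure FreeRay (β : Type*) [DecidableEq β] where
  r : ℕ → FreeGroup β
  len : ∀ n : ℕ, (r n).toWord.length = n
  pref : ∀ n : ℕ, (r n).toWord <+: (r (n + 1)).toWord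

/-- The Gromov product `(g | ξ)_e` at the identity: the distance from `e` to the median
of `e`, `g`, `ξ` in the tree, i.e. the length of the longest common prefix of the reduced
word of `g` with the ray `ξ`. -/
noncomputable def gromovProd {β : Type*} [DecidableEq β] (ξ : FreeRay β)
    (g : FreeGroup β) : ℕ :=
  sSup {n : ℕ | (ξ.r n).toWord <+: g.toWord}

/-- The tree Cayley graph of the free group: `a` and `b` are adjacent when `a⁻¹b` has
reduced word length 1 (i.e. is a generator or an inverse generator). -/
def freeCayley (β : Type*) [DecidableEq β] : SimpleGraph (FreeGroup β) :=
  SimpleGraph.fromRel (fun a b => (a⁻¹ * b).toWord.length = 1)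

/-- Reachability in the complement of a vertex set `K` of the tree. -/
def reachAvoiding {β : Type*} [DecidableEq β] (K : Set (FreeGroup β))
    (g h : FreeGroup β) : Prop :=
  ∃ w : (freeCayley β).Walk g h, ∀ v ∈ w.support, v ∉ K

/-- The end compactification of the tree: vertices together with ends (geodesic rays).
Its topology is generated by singletons of vertices together with, for each finite `K`
and `g₀ ∉ K`, the component of `g₀` in the complement of `K` together with all the ends
eventually lying in that component. -/
def endCompactificationTop (β : Type*) [DecidableEq β] :
    TopologicalSpace (FreeGroup β ⊕ FreeRay β) :=
  TopologicalSpace.generateFrom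
    ({U | ∃ g : FreeGroup β, U = {Sum.inl g}} ∪
     {U | ∃ K : Set (FreeGroup β), K.Finite ∧ ∃ g₀, g₀ ∉ K ∧
        U = Sum.inl '' {g : FreeGroup β | reachAvoiding K g₀ g} ∪
            Sum.inr '' {ξ : FreeRay β | ∃ N : ℕ, ∀ m ≥ N, reachAvoiding K g₀ (ξ.r m)}})

section Aux

open FreeGroup List

variable {β : Type*} [DecidableEq β]

/-- The tail of a reduced word is reduced. -/
lemma aux_reduce_tail {a : β × Bool} {t : List (β × Bool)}
    (h : FreeGroup.reduce (a :: t) = a :: t) : FreeGroup.reduce t = t := by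
  have hlen : (FreeGroup.reduce t).length ≤ t.length := (FreeGroup.Red.length_le reduce.red)
  rw [reduce.cons] at h
  rcases hr : FreeGroup.reduce t with _ | ⟨hd, tl⟩
  · rw [hr] at h
    dsimp only at h
    simp at h
    simp [h]
  · rw [hr] at h
    dsimp only at h
    by_cases hc : a.1 = hd.1 ∧ a.2 = !hd.2
    · rw [if_pos hc] at h
      apply_fun List.length at h
      rw [hr] at hlen
      simp at h hlen
      omega
    · rw [if_neg hc] at h
      rw [← (List.cons.injEq .. ▸ h :
        a = a ∧ hd :: tl = t).2]

/-- Appending a single letter to a reduced word either stays reduced or cancels the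
last letter. -/
lemma aux_reduce_append_single {l : List (β × Bool)} (hl : FreeGroup.reduce l = l)
    (x : β × Bool) :
    FreeGroup.reduce (l ++ [x]) = l ++ [x] ∨ FreeGroup.reduce (l ++ [x]) = l.dropLast := by
  induction l with
  | nil => left; simp [FreeGroup.reduce]
  | cons a t ih =>
    have ht : FreeGroup.reduce t = t := aux_reduce_tail hl
    rcases ih ht with h | h
    · rcases t with _ | ⟨b, t'⟩
      · rw [show (a :: ([] : List (β × Bool))) ++ [x] = a :: [x] from rfl, reduce.cons]
        rw [show FreeGroup.reduce [x] = [x] from rfl]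
        dsimp only
        by_cases hc : a.1 = x.1 ∧ a.2 = !x.2
        · right; rw [if_pos hc]; rfl
        · left; rw [if_neg hc]
      · have hcond : ¬(a.1 = b.1 ∧ a.2 = !b.2) := by
          intro hc
          rw [reduce.cons, ht] at hl
          dsimp only at hl
          rw [if_pos hc] at hl
          apply_fun List.length at hl
          simp at hl
          omega
        left
        rw [show (a :: (b :: t')) ++ [x] = a :: ((b :: t') ++ [x]) from rfl, reduce.cons, h,
          List.cons_append]
        dsimp only
        rw [if_neg hcond]
    · rcases t with _ | ⟨b, t'⟩
      · simp [FreeGroup.reduce] at h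
      · rcases t' with _ | ⟨c, t''⟩
        · right
          rw [show (a :: [b]) ++ [x] = a :: ([b] ++ [x]) from rfl, reduce.cons, h]
          rfl
        · have hcond : ¬(a.1 = b.1 ∧ a.2 = !b.2) := by
            intro hc
            rw [reduce.cons, ht] at hl
            dsimp only at hl
            rw [if_pos hc] at hl
            apply_fun List.length at hl
            simp at hl
          right
          rw [show (a :: (b :: c :: t'')) ++ [x] = a :: ((b :: c :: t'') ++ [x]) from rfl,
            reduce.cons, h,
            show (b :: c :: t'').dropLast = b :: (c :: t'').dropLast from rfl]
          dsimp only
          rw [if_neg hcond]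
          rfl

lemma aux_ray_pref (ξ : FreeRay β) {a b : ℕ} (h : a ≤ b) :
    (ξ.r a).toWord <+: (ξ.r b).toWord := by
  induction b, h using Nat.le_induction with
  | base => exact List.prefix_rfl
  | succ b hb ih => exact ih.trans (ξ.pref b)

lemma aux_adj_step {v w : FreeGroup β} (h : (freeCayley β).Adj v w) :
    ∃ x : β × Bool, w.toWord = FreeGroup.reduce (v.toWord ++ [x]) := by
  have hlen : (v⁻¹ * w).toWord.length = 1 := by
    rcases h.2 with h1 | h1
    · exact h1
    · have : (v⁻¹ * w) = (w⁻¹ * v)⁻¹ := by group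
      rw [this, toWord_inv, invRev_length, h1]
  obtain ⟨x, hx⟩ : ∃ x, (v⁻¹ * w).toWord = [x] :=
    List.length_eq_one_iff.mp hlen
  refine ⟨x, ?_⟩
  have hw : w = v * FreeGroup.mk [x] := by
    have : v⁻¹ * w = FreeGroup.mk [x] := by
      rw [← FreeGroup.mk_toWord (x := v⁻¹ * w), hx]
    rw [← this]; group
  rw [hw, ← FreeGroup.mk_toWord (x := v), FreeGroup.mul_mk, FreeGroup.toWord_mk,
    FreeGroup.mk_toWord]

lemma aux_walk_invariant (ξ : FreeRay β) (n : ℕ) :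
    ∀ {u g : FreeGroup β} (w : (freeCayley β).Walk u g),
      (∀ v ∈ w.support, v ≠ ξ.r (n + 1)) →
      (ξ.r (n + 2)).toWord <+: u.toWord → (ξ.r (n + 2)).toWord <+: g.toWord := by
  intro u g w
  induction w with
  | nil => intro _ h; exact h
  | @cons u v g hadj w ih =>
    intro hK hu
    refine ih (fun z hz => hK z (by simp [hz])) ?_
    obtain ⟨x, hx⟩ := aux_adj_step hadj
    rcases aux_reduce_append_single (FreeGroup.reduce_toWord u) x with h | h
    · rw [hx, h]
      exact hu.trans (List.prefix_append _ _)
    · have hvK : v ≠ ξ.r (n + 1) := hK v (by simp)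
      set p := (ξ.r (n + 2)).toWord with hp
      have hplen : p.length = n + 2 := ξ.len _
      obtain ⟨t, htp⟩ := hu
      rcases eq_or_ne t [] with rfl | ht
      · exfalso
        apply hvK
        apply FreeGroup.toWord_injective
        rw [hx, h, ← htp]
        simp only [List.append_nil]
        have h1 : (ξ.r (n + 1)).toWord <+: p := ξ.pref (n + 1)
        have h2 : p.dropLast <+: p := List.dropLast_prefix p
        rw [List.prefix_iff_eq_take.mp h1, List.prefix_iff_eq_take.mp h2,
          List.length_dropLast, hplen, ξ.len]
        norm_num
      · rw [hx, h, ← htp, List.dropLast_append_of_ne_nil ht]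
        exact List.prefix_append _ _

lemma aux_ray_adj (ξ : FreeRay β) (k : ℕ) : (freeCayley β).Adj (ξ.r k) (ξ.r (k + 1)) := by
  obtain ⟨t, ht⟩ := ξ.pref k
  have hlt : t.length = 1 := by
    have := ξ.len k
    have h2 := ξ.len (k + 1)
    rw [← ht] at h2
    simp at h2
    omega
  obtain ⟨x, rfl⟩ := List.length_eq_one_iff.mp hlt
  have hne : ξ.r k ≠ ξ.r (k + 1) := by
    intro he
    apply_fun (fun z => z.toWord.length) at he
    rw [ξ.len, ξ.len] at he
    omega
  rw [freeCayley, SimpleGraph.fromRel_adj]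
  refine ⟨hne, Or.inl ?_⟩
  have h3 : (ξ.r k)⁻¹ * ξ.r (k + 1) = FreeGroup.mk [x] := by
    have h4 : ξ.r (k + 1) = ξ.r k * FreeGroup.mk [x] := by
      rw [← FreeGroup.mk_toWord (x := ξ.r k), FreeGroup.mul_mk, ht, FreeGroup.mk_toWord]
    rw [h4]; group
  rw [h3, FreeGroup.toWord_mk]
  rfl

lemma aux_ray_ne (ξ : FreeRay β) {a b : ℕ} (h : a ≠ b) : ξ.r a ≠ ξ.r b := by
  intro he
  apply_fun (fun z => z.toWord.length) at he
  rw [ξ.len, ξ.len] at he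
  exact h he

lemma aux_ray_reach (ξ : FreeRay β) (n : ℕ) (k : ℕ) :
    reachAvoiding {ξ.r (n + 1)} (ξ.r (n + 2)) (ξ.r (n + 2 + k)) := by
  induction k with
  | zero =>
    exact ⟨SimpleGraph.Walk.nil, by
      intro v hv
      simp only [SimpleGraph.Walk.support_nil, List.mem_singleton] at hv
      subst hv
      simpa using aux_ray_ne ξ (by omega : n + 2 ≠ n + 1)⟩
  | succ k ih =>
    obtain ⟨w, hw⟩ := ih
    refine ⟨w.concat (aux_ray_adj ξ (n + 2 + k)), ?_⟩
    intro v hv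
    rw [SimpleGraph.Walk.support_concat, List.mem_append] at hv
    rcases hv with hv | hv
    · exact hw v hv
    · simp only [List.mem_singleton] at hv
      subst hv
      simpa using aux_ray_ne ξ (by omega : n + 2 + (k + 1) ≠ n + 1)

end Aux

/-- the end `ξ` does not lie in the closure of `G(n,ξ) = {g : (g|ξ)_e ≤ n}`
in the end compactification of the tree. -/
theorem stmt13 {β : Type*} [DecidableEq β] (ξ : FreeRay β) (n : ℕ) :
    letI : TopologicalSpace (FreeGroup β ⊕ FreeRay β) := endCompactificationTop β
    (Sum.inr ξ : FreeGroup β ⊕ FreeRay β) ∉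
      closure (Sum.inl '' {g : FreeGroup β | gromovProd ξ g ≤ n}) := by
  letI : TopologicalSpace (FreeGroup β ⊕ FreeRay β) := endCompactificationTop β
  intro hmem
  set K : Set (FreeGroup β) := {ξ.r (n + 1)} with hKdef
  set g₀ : FreeGroup β := ξ.r (n + 2) with hg₀def
  set U : Set (FreeGroup β ⊕ FreeRay β) :=
    Sum.inl '' {g : FreeGroup β | reachAvoiding K g₀ g} ∪
      Sum.inr '' {ξ' : FreeRay β | ∃ N : ℕ, ∀ m ≥ N, reachAvoiding K g₀ (ξ'.r m)} with hUdef
  have hg₀K : g₀ ∉ K := by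
    simp only [hKdef, Set.mem_singleton_iff]
    exact aux_ray_ne ξ (by omega : n + 2 ≠ n + 1)
  have hUopen : IsOpen U :=
    TopologicalSpace.isOpen_generateFrom_of_mem
      (Or.inr ⟨K, Set.finite_singleton _, g₀, hg₀K, rfl⟩)
  have hξU : (Sum.inr ξ : FreeGroup β ⊕ FreeRay β) ∈ U := by
    refine Or.inr ⟨ξ, ⟨n + 2, fun m hm => ?_⟩, rfl⟩
    obtain ⟨k, rfl⟩ := Nat.exists_eq_add_of_le hm
    exact aux_ray_reach ξ n k
  obtain ⟨y, hyU, hyS⟩ := mem_closure_iff.mp hmem U hUopen hξU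
  obtain ⟨g, hg, rfl⟩ := hyS
  have hreach : reachAvoiding K g₀ g := by
    rcases hyU with ⟨g', hg', he⟩ | ⟨ξ', _, he⟩
    · cases Sum.inl.injEq .. ▸ he
      exact hg'
    · exact absurd he (by simp)
  obtain ⟨w, hw⟩ := hreach
  have hpref : (ξ.r (n + 2)).toWord <+: g.toWord := by
    refine aux_walk_invariant ξ n w (fun v hv => ?_) List.prefix_rfl
    have := hw v hv
    simpa [hKdef] using this
  have hbdd : BddAbove {m : ℕ | (ξ.r m).toWord <+: g.toWord} := by
    refine ⟨g.toWord.length, fun m hm => ?_⟩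
    have := hm.length_le
    rwa [ξ.len] at this
  have hle : n + 2 ≤ gromovProd ξ g := le_csSup hbdd hpref
  have : gromovProd ξ g ≤ n := hg
  omega
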